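/- There exists R > 0 such that for every point p = (x, y, z) ∈ ℝ³ with ‖p − c‖ ≥ R, where c = (0, 0, 38), the Euclidean inner product ⟨F(p), p − c⟩ is strictly negative. (Explicitly, ⟨F(p), p − c⟩ = −10x² − y² − (8/3)z² + (304/3)z, which is negative outside a bounded ball centered at c.) -/

import Mathlib

open RealInnerProductSpace

/-- The Lorenz vector field `F(x, y, z) = (10(y − x), 28x − y − xz, xy − (8/3)z)`
on `ℝ³` (with classical parameters σ = 10, ρ = 28, β = 8/3). -/
noncomputable def lorenzField (p : EuclideanSpace ℝ (Fin 3)) : EuclideanSpace ℝ (Fin 3) :=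
  (WithLp.equiv 2 (Fin 3 → ℝ)).symm
    ![10 * (p 1 - p 0), 28 * p 0 - p 1 - p 0 * p 2, p 0 * p 1 - (8 / 3) * p 2]

/-- The center `c = (0, 0, 38)` of Lorenz's trapping ball. -/
noncomputable def lorenzCenter : EuclideanSpace ℝ (Fin 3) :=
  (WithLp.equiv 2 (Fin 3 → ℝ)).symm ![0, 0, 38]

/-- There exists `R > 0` such that at every point `p` with `‖p − c‖ ≥ R`, where
`c = (0, 0, 38)`, the Lorenz vector field points strictly inward:
`⟨F(p), p − c⟩ < 0`. -/
theorem lorenzField_inner_neg_outside_ball :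
    ∃ R > (0 : ℝ), ∀ p : EuclideanSpace ℝ (Fin 3),
      R ≤ ‖p - lorenzCenter‖ → ⟪lorenzField p, p - lorenzCenter⟫ < 0 := by
  refine ⟨200, by norm_num, fun p h => ?_⟩
  set x := p 0 with hx
  set y := p 1 with hy
  set z := p 2 with hz
  have hsub : ∀ i, (p - lorenzCenter) i = p i - lorenzCenter i := fun i => rfl
  have h0 : (p - lorenzCenter) 0 = x := by simp [hsub, lorenzCenter]; rfl
  have h1 : (p - lorenzCenter) 1 = y := by simp [hsub, lorenzCenter]; rfl
  have h2 : (p - lorenzCenter) 2 = z - 38 := by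
    simp [hsub, lorenzCenter]; rfl
  have hc0 : lorenzCenter 0 = 0 := rfl
  have hc1 : lorenzCenter 1 = 0 := rfl
  have hc2 : lorenzCenter 2 = 38 := rfl
  have hinner : ⟪lorenzField p, p - lorenzCenter⟫ =
      -10 * x ^ 2 - y ^ 2 - (8 / 3) * (z - 38) ^ 2 - (304 / 3) * (z - 38) := by
    simp only [EuclideanSpace.inner_eq_star_dotProduct]
    simp [dotProduct, Fin.sum_univ_three, lorenzField, h0, h1, h2, hc0, hc1, hc2]
    ring
  have hnorm : 200 ^ 2 ≤ x ^ 2 + y ^ 2 + (z - 38) ^ 2 := by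
    have := EuclideanSpace.norm_eq (p - lorenzCenter)
    have hn2 : ‖p - lorenzCenter‖ ^ 2 = x ^ 2 + y ^ 2 + (z - 38) ^ 2 := by
      rw [this, Real.sq_sqrt (by positivity)]
      simp [Fin.sum_univ_three, h0, h1, h2, hc0, hc1, hc2, sq_abs]; rfl
    calc (200 : ℝ) ^ 2 ≤ ‖p - lorenzCenter‖ ^ 2 := by
          apply pow_le_pow_left₀ (by norm_num) h
      _ = _ := hn2
  rw [hinner]
  nlinarith [sq_nonneg x, sq_nonneg y, sq_nonneg (z - 38), sq_nonneg (z - 38 + 57)]
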